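/- Let ψ : (0,∞) → (0,∞) be continuous, non-increasing, and differentiable, and let F : (0,∞) → (0,∞) be continuous and non-increasing with lim_{r→∞} F(r) = 0. Suppose that for all t > 0 and r > 0, ψ'(t) ≤ (1/(2r))·(2 F(r) − ψ(t)²). Then lim_{t→∞} ψ(t) = 0. -/

import Mathlib

open Set Filter

/-- Abstract decay of the on-diagonal heat kernel: if `ψ` is positive, continuous,
non-increasing and differentiable on `(0,∞)`, `F` is positive, continuous,
non-increasing with `F(r) → 0` as `r → ∞`, and
`ψ'(t) ≤ (1/(2r))(2 F(r) - ψ(t)²)` for all `t, r > 0`, then `ψ(t) → 0` as `t → ∞`. -/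
theorem psi_tendsto_zero (ψ ψ' F : ℝ → ℝ)
    (hψpos : ∀ t, 0 < t → 0 < ψ t)
    (hψcont : ContinuousOn ψ (Ioi 0))
    (hψmono : ∀ s t, 0 < s → s ≤ t → ψ t ≤ ψ s)
    (hψderiv : ∀ t, 0 < t → HasDerivAt ψ (ψ' t) t)
    (hFpos : ∀ r, 0 < r → 0 < F r)
    (hFcont : ContinuousOn F (Ioi 0))
    (hFmono : ∀ r s, 0 < r → r ≤ s → F s ≤ F r)
    (hFlim : Tendsto F atTop (nhds 0))
    (hineq : ∀ t r, 0 < t → 0 < r → ψ' t ≤ (1 / (2 * r)) * (2 * F r - (ψ t) ^ 2)) :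
    Tendsto ψ atTop (nhds 0) := by
  -- Key claim: for every ε > 0 there is T > 0 with ψ T < ε.
  have key : ∀ ε : ℝ, 0 < ε → ∃ T : ℝ, 0 < T ∧ ψ T < ε := by
    intro ε hε
    by_contra h
    push_neg at h
    have hεψ : ∀ t : ℝ, 0 < t → ε ≤ ψ t := fun t ht => h t ht
    -- choose r with 2 F r < ε^2/4 and r ≥ 1
    have hev : ∀ᶠ r in atTop, F r < ε ^ 2 / 8 := by
      have := hFlim.eventually (gt_mem_nhds (show (0:ℝ) < ε ^ 2 / 8 by positivity))
      exact this
    obtain ⟨r, hr1, hrF⟩ := (eventually_ge_atTop (1:ℝ)).and hev |>.exists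
    have hr0 : (0:ℝ) < r := lt_of_lt_of_le one_pos hr1
    set c : ℝ := 3 * ε ^ 2 / (8 * r) with hc
    have hcpos : 0 < c := by positivity
    -- derivative bound: ψ' t ≤ -c for all t > 0
    have hderiv_bound : ∀ t : ℝ, 0 < t → ψ' t ≤ -c := by
      intro t ht
      have h1 := hineq t r ht hr0
      have h2 : (ψ t) ^ 2 ≥ ε ^ 2 := by
        have := hεψ t ht
        nlinarith [hε.le]
      have h3 : 2 * F r - (ψ t) ^ 2 ≤ -(3 * ε ^ 2 / 4) := by nlinarith
      have h4 : (1 / (2 * r)) * (2 * F r - (ψ t) ^ 2) ≤ (1 / (2 * r)) * (-(3 * ε ^ 2 / 4)) := by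
        apply mul_le_mul_of_nonneg_left h3
        positivity
      have h5 : (1 / (2 * r)) * (-(3 * ε ^ 2 / 4)) = -c := by
        field_simp [hc]
        rw [hc]; field_simp; norm_num
      linarith
    -- the function g t = ψ t + c * t is antitone on [1, ∞)
    set g : ℝ → ℝ := fun t => ψ t + c * t with hg
    have hganti : AntitoneOn g (Ici (1:ℝ)) := by
      apply antitoneOn_of_deriv_nonpos (convex_Ici 1)
      · intro x hx
        have hx0 : (0:ℝ) < x := lt_of_lt_of_le one_pos hx
        exact ((hψderiv x hx0).add ((hasDerivAt_id x).const_mul c)).continuousAt.continuousWithinAt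
      · intro x hx
        rw [interior_Ici] at hx
        have hx0 : (0:ℝ) < x := lt_trans one_pos hx
        exact ((hψderiv x hx0).add
          ((hasDerivAt_id x).const_mul c)).differentiableAt.differentiableWithinAt
      · intro x hx
        rw [interior_Ici] at hx
        have hx0 : (0:ℝ) < x := lt_trans one_pos hx
        have hd : HasDerivAt g (ψ' x + c * 1) x :=
          (hψderiv x hx0).add ((hasDerivAt_id x).const_mul c)
        rw [hd.deriv]
        have := hderiv_bound x hx0
        linarith
    -- pick t large to contradict positivity of ψ
    set T : ℝ := max 1 ((ψ 1 + c) / c + 1) with hT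
    have hT1 : (1:ℝ) ≤ T := le_max_left _ _
    have hT2 : (ψ 1 + c) / c + 1 ≤ T := le_max_right _ _
    have hgT : g T ≤ g 1 := hganti (mem_Ici.mpr le_rfl) (mem_Ici.mpr hT1) hT1
    have hψT : ψ T ≤ ψ 1 + c - c * T := by
      simp only [hg] at hgT
      linarith
    have hcT : ψ 1 + c ≤ c * T := by
      have : (ψ 1 + c) / c ≤ T - 1 := by linarith
      have h6 : ψ 1 + c ≤ c * (T - 1) := by
        rw [div_le_iff₀ hcpos] at this
        linarith [mul_comm c (T-1)]
      nlinarith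
    have hψTpos : 0 < ψ T := hψpos T (lt_of_lt_of_le one_pos hT1)
    linarith
  -- conclude via monotonicity
  rw [Metric.tendsto_atTop]
  intro ε hε
  obtain ⟨T, hT0, hTε⟩ := key ε hε
  refine ⟨T, fun n hn => ?_⟩
  have hn0 : 0 < n := lt_of_lt_of_le hT0 hn
  have h1 : ψ n ≤ ψ T := hψmono T n hT0 hn
  have h2 : 0 < ψ n := hψpos n hn0
  rw [Real.dist_eq, sub_zero, abs_of_pos h2]
  linarith
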